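/- Let p be an odd prime, let d be a positive divisor of p−1, set γ = (p−1)/d, and fix ε ∈ {−1, 1}. Let (a₂, a₁, v) and (b₂, b₁, w) be admissible tuples (i.e. integers with 0 ≤ a₁, a₂, b₁, b₂ ≤ p−1, β(v) ≤ a₁ + p·a₂ and β(w) ≤ b₁ + p·b₂). Then κ(a₂, a₁, v) = κ(b₂, b₁, w) (equality of triples in ℤ³) if and only if v + d·(a₁ + p·a₂) = w + d·(b₁ + p·b₂) and v − d·α(v) = w − d·α(w). -/

import Mathlib

/-- Decomposition uniqueness: if `p*x₂+x₁ = p*y₂+y₁` with `x₁,y₁ ∈ [0,p)`,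
then the components agree. -/
lemma keyterm_pair_eq_aux (p x₂ x₁ y₂ y₁ : ℤ) (hp : 0 < p)
    (hx0 : 0 ≤ x₁) (hx1 : x₁ < p) (hy0 : 0 ≤ y₁) (hy1 : y₁ < p)
    (h : p * x₂ + x₁ = p * y₂ + y₁) : x₂ = y₂ ∧ x₁ = y₁ := by
  have h1 : x₁ - y₁ = p * (y₂ - x₂) := by linarith [h]
  have h2 : y₂ - x₂ = 0 := by
    by_contra hne
    have habs : 1 ≤ |y₂ - x₂| := Int.one_le_abs (by omega)
    have hge : p ≤ |x₁ - y₁| := by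
      rw [h1, abs_mul, abs_of_pos hp]
      nlinarith [abs_nonneg (y₂ - x₂)]
    have hlt : |x₁ - y₁| < p := abs_lt.mpr ⟨by linarith, by linarith⟩
    linarith
  rw [h2, mul_zero] at h1
  constructor
  · omega
  · omega

/-- Key-term equality at poles of `f` (Lemma 3.9, case `P ∈ B₁`):
two admissible tuples have the same key term iff
`v + d·(a₁ + p·a₂) = w + d·(b₁ + p·b₂)` and `v − d·α(v) = w − d·α(w)`. -/
theorem keyterm_eq_iff_polesOfF
    (p : ℕ) (hp : p.Prime) (hodd : Odd p)
    (d γ ε : ℤ) (hd : 0 < d) (hγ : d * γ = (p : ℤ) - 1)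
    (hε : ε = -1 ∨ ε = 1)
    (α β : ℤ → ℤ)
    (hα : ∀ v : ℤ, α v = Int.fdiv (γ * (v - ε)) (p : ℤ))
    (hβ : ∀ v : ℤ, β v = γ * (v - ε) - (p : ℤ) * α v)
    (κ : ℤ × ℤ × ℤ → ℤ × ℤ × ℤ)
    (hκ : ∀ a₂ a₁ v : ℤ, κ (a₂, a₁, v) =
      if β v ≤ a₁ then (a₂, a₁ - β v, v - d * α v)
      else (a₂ - 1, a₁ - β v + (p : ℤ), v - d * α v))
    (a₂ a₁ v b₂ b₁ w : ℤ)
    (ha₁ : 0 ≤ a₁ ∧ a₁ ≤ (p : ℤ) - 1) (ha₂ : 0 ≤ a₂ ∧ a₂ ≤ (p : ℤ) - 1)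
    (hb₁ : 0 ≤ b₁ ∧ b₁ ≤ (p : ℤ) - 1) (hb₂ : 0 ≤ b₂ ∧ b₂ ≤ (p : ℤ) - 1)
    (hadmv : β v ≤ a₁ + (p : ℤ) * a₂) (hadmw : β w ≤ b₁ + (p : ℤ) * b₂) :
    κ (a₂, a₁, v) = κ (b₂, b₁, w) ↔
      v + d * (a₁ + (p : ℤ) * a₂) = w + d * (b₁ + (p : ℤ) * b₂) ∧
      v - d * α v = w - d * α w := by
  have hp0 : (0 : ℤ) < (p : ℤ) := by exact_mod_cast hp.pos
  have hβfmod : ∀ u : ℤ, β u = Int.fmod (γ * (u - ε)) (p : ℤ) := by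
    intro u
    rw [hβ, hα, Int.fmod_def]
  have hβ0 : ∀ u : ℤ, 0 ≤ β u := fun u => by
    rw [hβfmod]; exact Int.fmod_nonneg_of_pos _ hp0
  have hβlt : ∀ u : ℤ, β u < (p : ℤ) := fun u => by
    rw [hβfmod]; exact Int.fmod_lt_of_pos _ hp0
  have hdβ : ∀ u : ℤ, d * β u = ((p : ℤ) - 1) * (u - ε) - (p : ℤ) * (d * α u) := by
    intro u
    rw [hβ]
    linear_combination (u - ε) * hγ
  -- the key arithmetic identity
  have hkey : d * ((a₁ + (p : ℤ) * a₂ - β v) - (b₁ + (p : ℤ) * b₂ - β w)) =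
      ((v + d * (a₁ + (p : ℤ) * a₂)) - (w + d * (b₁ + (p : ℤ) * b₂)))
        - (p : ℤ) * ((v - d * α v) - (w - d * α w)) := by
    linear_combination hdβ w - hdβ v
  constructor
  · intro h
    rw [hκ, hκ] at h
    split_ifs at h with h1 h2 h2 <;>
      simp only [Prod.mk.injEq] at h <;>
      obtain ⟨e2, e1, e3⟩ := h <;>
      refine ⟨?_, e3⟩ <;>
      · have hX : (a₁ + (p : ℤ) * a₂) - β v = (b₁ + (p : ℤ) * b₂) - β w := by
          linear_combination (p : ℤ) * e2 + e1
        linear_combination d * hX + (p : ℤ) * e3 - hkey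
  · rintro ⟨hvw, hteq⟩
    have hdX : d * ((a₁ + (p : ℤ) * a₂ - β v) - (b₁ + (p : ℤ) * b₂ - β w)) = 0 := by
      linear_combination hkey + hvw - (p : ℤ) * hteq
    have hX : (a₁ + (p : ℤ) * a₂ - β v) - (b₁ + (p : ℤ) * b₂ - β w) = 0 :=
      (mul_eq_zero.mp hdX).resolve_left hd.ne'
    rw [hκ, hκ]
    have hbv0 := hβ0 v
    have hbv1 := hβlt v
    have hbw0 := hβ0 w
    have hbw1 := hβlt w
    split_ifs with h1 h2 h2 <;> simp only [Prod.mk.injEq]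
    · obtain ⟨c2, c1⟩ := keyterm_pair_eq_aux (p : ℤ) a₂ (a₁ - β v) b₂ (b₁ - β w) hp0
        (by linarith) (by linarith [ha₁.2]) (by linarith) (by linarith [hb₁.2])
        (by linarith)
      exact ⟨c2, c1, hteq⟩
    · obtain ⟨c2, c1⟩ := keyterm_pair_eq_aux (p : ℤ) a₂ (a₁ - β v) (b₂ - 1)
        (b₁ - β w + (p : ℤ)) hp0
        (by linarith) (by linarith [ha₁.2]) (by linarith) (by linarith [hb₁.1])
        (by linarith)
      exact ⟨c2, c1, hteq⟩
    · obtain ⟨c2, c1⟩ := keyterm_pair_eq_aux (p : ℤ) (a₂ - 1) (a₁ - β v + (p : ℤ))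
        b₂ (b₁ - β w) hp0
        (by linarith) (by linarith [ha₁.1]) (by linarith) (by linarith [hb₁.2])
        (by linarith)
      exact ⟨c2, c1, hteq⟩
    · obtain ⟨c2, c1⟩ := keyterm_pair_eq_aux (p : ℤ) (a₂ - 1) (a₁ - β v + (p : ℤ))
        (b₂ - 1) (b₁ - β w + (p : ℤ)) hp0
        (by linarith) (by linarith [ha₁.1]) (by linarith) (by linarith [hb₁.1])
        (by linarith)
      exact ⟨c2, c1, hteq⟩
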